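/- Let (N, L, K, R, P) be twice differentiable real functions on an open interval I ⊂ (0,∞) with N, L, K positive, satisfying the full static cylindrically symmetric Einstein–Yang–Mills ODE system. Then the Noether charge Q₁(r) = (1/2)·N L K·(N'/N − L'/L − 2 P P'/L²) has vanishing derivative on I, i.e. Q₁ is constant along every solution. -/

import Mathlib

open Set

/-- The full static cylindrically symmetric Einstein–Yang–Mills ODE system in
the Kasner gauge, for five radial functions `N, L, K` (metric) and `R, P`
(Yang–Mills), stated on a set `I`. -/
def EYMSystem (N L K R P : ℝ → ℝ) (I : Set ℝ) : Prop :=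
  ∀ r ∈ I,
    deriv (fun s => deriv N s * L s * K s) r =
      N r * L r * K r *
        ((deriv P r) ^ 2 / (L r) ^ 2 + (deriv R r) ^ 2 / (K r) ^ 2 +
          (P r) ^ 2 * (R r) ^ 2 / ((L r) ^ 2 * (K r) ^ 2)) ∧
    deriv (fun s => N s * deriv L s * K s) r =
      N r * L r * K r *
        (-(deriv P r) ^ 2 / (L r) ^ 2 + (deriv R r) ^ 2 / (K r) ^ 2 -
          (P r) ^ 2 * (R r) ^ 2 / ((L r) ^ 2 * (K r) ^ 2)) ∧
    deriv (fun s => N s * L s * deriv K s) r =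
      N r * L r * K r *
        ((deriv P r) ^ 2 / (L r) ^ 2 - (deriv R r) ^ 2 / (K r) ^ 2 -
          (P r) ^ 2 * (R r) ^ 2 / ((L r) ^ 2 * (K r) ^ 2)) ∧
    deriv (fun s => N s * L s / K s * deriv R s) r =
      N r / (L r * K r) * (R r * (P r) ^ 2) ∧
    deriv (fun s => N s * K s / L s * deriv P s) r =
      N r / (L r * K r) * (P r * (R r) ^ 2)

/-- The Noether charge
`Q₁ = (1/2) N L K (N'/N − L'/L − 2 P P'/L²)` has vanishing derivative on `I`,
i.e. it is constant along every solution of the EYM system. -/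
theorem stmt_6 (N L K R P : ℝ → ℝ) (I : Set ℝ)
    (hIopen : IsOpen I) (hIconn : IsPreconnected I) (hIsub : I ⊆ Ioi 0)
    (hN : ∀ r ∈ I, 0 < N r) (hL : ∀ r ∈ I, 0 < L r) (hK : ∀ r ∈ I, 0 < K r)
    (hNd : ContDiffOn ℝ 2 N I) (hLd : ContDiffOn ℝ 2 L I)
    (hKd : ContDiffOn ℝ 2 K I) (hRd : ContDiffOn ℝ 2 R I)
    (hPd : ContDiffOn ℝ 2 P I)
    (h : EYMSystem N L K R P I) :
    ∀ r ∈ I,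
      deriv (fun s =>
        (1 / 2) * (N s * L s * K s) *
          (deriv N s / N s - deriv L s / L s - 2 * P s * deriv P s / (L s) ^ 2)) r
        = 0 := by
  intro r hr
  have hmem : I ∈ nhds r := hIopen.mem_nhds hr
  -- differentiability facts at r
  have dN : DifferentiableAt ℝ N r :=
    (hNd.differentiableOn two_ne_zero).differentiableAt hmem
  have dL : DifferentiableAt ℝ L r :=
    (hLd.differentiableOn two_ne_zero).differentiableAt hmem
  have dK : DifferentiableAt ℝ K r :=
    (hKd.differentiableOn two_ne_zero).differentiableAt hmem
  have dP : DifferentiableAt ℝ P r :=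
    (hPd.differentiableOn two_ne_zero).differentiableAt hmem
  have dN' : DifferentiableAt ℝ (deriv N) r :=
    (((hNd.deriv_of_isOpen hIopen (le_refl 2)).differentiableOn
      one_ne_zero).differentiableAt hmem)
  have dL' : DifferentiableAt ℝ (deriv L) r :=
    (((hLd.deriv_of_isOpen hIopen (le_refl 2)).differentiableOn
      one_ne_zero).differentiableAt hmem)
  have dP' : DifferentiableAt ℝ (deriv P) r :=
    (((hPd.deriv_of_isOpen hIopen (le_refl 2)).differentiableOn
      one_ne_zero).differentiableAt hmem)
  have hLne : L r ≠ 0 := (hL r hr).ne'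
  have hKne : K r ≠ 0 := (hK r hr).ne'
  obtain ⟨h1, h2, h3, h4, h5⟩ := h r hr
  -- HasDerivAt facts for the combinations
  have dA : DifferentiableAt ℝ (fun s => deriv N s * L s * K s) r :=
    (dN'.mul dL).mul dK
  have dB : DifferentiableAt ℝ (fun s => N s * deriv L s * K s) r :=
    (dN.mul dL').mul dK
  have dC : DifferentiableAt ℝ (fun s => N s * K s / L s * deriv P s) r :=
    ((dN.mul dK).div dL hLne).mul dP'
  have hA : HasDerivAt (fun s => deriv N s * L s * K s)
      (N r * L r * K r *
        ((deriv P r) ^ 2 / (L r) ^ 2 + (deriv R r) ^ 2 / (K r) ^ 2 +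
          (P r) ^ 2 * (R r) ^ 2 / ((L r) ^ 2 * (K r) ^ 2))) r := by
    have := dA.hasDerivAt
    rwa [h1] at this
  have hB : HasDerivAt (fun s => N s * deriv L s * K s)
      (N r * L r * K r *
        (-(deriv P r) ^ 2 / (L r) ^ 2 + (deriv R r) ^ 2 / (K r) ^ 2 -
          (P r) ^ 2 * (R r) ^ 2 / ((L r) ^ 2 * (K r) ^ 2))) r := by
    have := dB.hasDerivAt
    rwa [h2] at this
  have hC : HasDerivAt (fun s => N s * K s / L s * deriv P s)
      (N r / (L r * K r) * (P r * (R r) ^ 2)) r := by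
    have := dC.hasDerivAt
    rwa [h5] at this
  have hCP : HasDerivAt (fun s => N s * K s / L s * deriv P s * P s)
      (N r / (L r * K r) * (P r * (R r) ^ 2) * P r +
        N r * K r / L r * deriv P r * deriv P r) r :=
    hC.mul dP.hasDerivAt
  have hF : HasDerivAt (fun s =>
      (1 / 2 : ℝ) * (deriv N s * L s * K s - N s * deriv L s * K s -
        2 * (N s * K s / L s * deriv P s * P s)))
      ((1 / 2 : ℝ) * ((N r * L r * K r *
        ((deriv P r) ^ 2 / (L r) ^ 2 + (deriv R r) ^ 2 / (K r) ^ 2 +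
          (P r) ^ 2 * (R r) ^ 2 / ((L r) ^ 2 * (K r) ^ 2))) -
        (N r * L r * K r *
        (-(deriv P r) ^ 2 / (L r) ^ 2 + (deriv R r) ^ 2 / (K r) ^ 2 -
          (P r) ^ 2 * (R r) ^ 2 / ((L r) ^ 2 * (K r) ^ 2))) -
        2 * (N r / (L r * K r) * (P r * (R r) ^ 2) * P r +
          N r * K r / L r * deriv P r * deriv P r))) r :=
    ((hA.sub hB).sub (hCP.const_mul 2)).const_mul (1 / 2)
  -- the two functions agree near r
  have heq : (fun s =>
      (1 / 2) * (N s * L s * K s) *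
        (deriv N s / N s - deriv L s / L s - 2 * P s * deriv P s / (L s) ^ 2))
      =ᶠ[nhds r] (fun s =>
      (1 / 2 : ℝ) * (deriv N s * L s * K s - N s * deriv L s * K s -
        2 * (N s * K s / L s * deriv P s * P s))) := by
    filter_upwards [hmem] with s hs
    have hNs : N s ≠ 0 := (hN s hs).ne'
    have hLs : L s ≠ 0 := (hL s hs).ne'
    field_simp
  rw [heq.deriv_eq, hF.deriv]
  field_simp
  ring
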